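/- Jordan Curve Theorem for digital topology: if S ⊆ ℤ² is a c₂-simple closed curve with at least 4 points, then ℤ² \ S has exactly two c₁-connected components, one finite and one infinite. -/

import Mathlib

/-- c₁ (4-)adjacency on ℤ²: ℓ₁ distance 1. -/
def c1Adj (p q : ℤ × ℤ) : Prop := |p.1 - q.1| + |p.2 - q.2| = 1

/-- c₂ (8-)adjacency on ℤ²: distinct with ℓ∞ distance ≤ 1. -/
def c2Adj (p q : ℤ × ℤ) : Prop := p ≠ q ∧ |p.1 - q.1| ≤ 1 ∧ |p.2 - q.2| ≤ 1

/-- Connectivity of a subset of ℤ² w.r.t. an adjacency relation. -/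
def ConnIn (adj : ℤ × ℤ → ℤ × ℤ → Prop) (A : Set (ℤ × ℤ)) : Prop :=
  ∀ a ∈ A, ∀ b ∈ A, Relation.ReflTransGen (fun x y => x ∈ A ∧ y ∈ A ∧ adj x y) a b

/-- Reachability within a set `W` via an adjacency relation. -/
def Reach (adj : ℤ × ℤ → ℤ × ℤ → Prop) (W : Set (ℤ × ℤ)) (x y : ℤ × ℤ) : Prop :=
  Relation.ReflTransGen (fun u v => u ∈ W ∧ v ∈ W ∧ adj u v) x y

/-- (c₂,c₂)-continuity of a self-map on a subset of ℤ². -/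
def DigContOn (X : Set (ℤ × ℤ)) (f : ℤ × ℤ → ℤ × ℤ) : Prop :=
  ∀ p ∈ X, ∀ q ∈ X, c2Adj p q → f p = f q ∨ c2Adj (f p) (f q)

/-- (X, c₂) has the approximate fixed point property. -/
def AFPPOn (X : Set (ℤ × ℤ)) : Prop :=
  ∀ f : ℤ × ℤ → ℤ × ℤ, (∀ p ∈ X, f p ∈ X) → DigContOn X f →
    ∃ p ∈ X, f p = p ∨ c2Adj p (f p)

/-- S is a c₂-simple closed curve (of at least 4 points). -/
def SCC (S : Set (ℤ × ℤ)) : Prop :=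
  ∃ m : ℕ, 4 ≤ m ∧ ∃ s : ZMod m → ℤ × ℤ, Function.Injective s ∧ Set.range s = S ∧
    (∀ i, c2Adj (s i) (s (i + 1))) ∧ (∀ i j, c2Adj (s i) (s j) → j = i + 1 ∨ j = i - 1)

/-- The interior of S: the finite c₁-component(s) side of ℤ² \ S;
a point is interior iff its c₁-reachable set inside the complement of S is finite. -/
def DigInterior (S : Set (ℤ × ℤ)) : Set (ℤ × ℤ) :=
  {x | x ∉ S ∧ Set.Finite {y | Reach c1Adj Sᶜ x y}}

/-- S is a bounding curve of the digital disk X. -/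
def BoundingCurve (S X : Set (ℤ × ℤ)) : Prop := SCC S ∧ X = S ∪ DigInterior S

/-- Embedding of ℤ² into ℝ². -/
def emb (p : ℤ × ℤ) : ℝ × ℝ := ((p.1 : ℝ), (p.2 : ℝ))

/-- A digital line segment: a c₂-connected collinear set with at least 2 points. -/
def DigSegment (L : Set (ℤ × ℤ)) : Prop :=
  2 ≤ L.ncard ∧ ConnIn c2Adj L ∧ Collinear ℝ (emb '' L)

/-- p is an endpoint of the digital segment L. -/
def Endpoint (L : Set (ℤ × ℤ)) (p : ℤ × ℤ) : Prop :=
  p ∈ L ∧ emb p ∉ convexHull ℝ (emb '' (L \ {p}))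

/-- L is a maximal digital line segment contained in S. -/
def MaxSegOf (S L : Set (ℤ × ℤ)) : Prop :=
  L ⊆ S ∧ DigSegment L ∧ ∀ L', L ⊆ L' → L' ⊆ S → DigSegment L' → L' = L

/-- X is a digitally convex disk with bounding curve S: the endpoints of the maximal
digital line segments of S are exactly the vertices (extreme points) of hull(X). -/
def ConvexDiskWith (S X : Set (ℤ × ℤ)) : Prop :=
  BoundingCurve S X ∧
  {p | ∃ L, MaxSegOf S L ∧ Endpoint L p} =
    {p | p ∈ X ∧ emb p ∈ Set.extremePoints ℝ (convexHull ℝ (emb '' X))}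

/-- X is a digitally convex disk. -/
def ConvexDisk (X : Set (ℤ × ℤ)) : Prop := ∃ S, ConvexDiskWith S X

/-- X is digitally convex: a point, a digital segment, or a convex disk. -/
def DigConvex (X : Set (ℤ × ℤ)) : Prop :=
  (∃ p, X = {p}) ∨ DigSegment X ∨ ConvexDisk X

/-- C is a c₂-component of ℤ² \ X. -/
def IsC2Component (X C : Set (ℤ × ℤ)) : Prop :=
  ∃ c ∈ Xᶜ, C = {y | Reach c2Adj Xᶜ c y}

/-- N*(X, c₂, x). -/
def NStar (X : Set (ℤ × ℤ)) (x : ℤ × ℤ) : Set (ℤ × ℤ) :=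
  {y ∈ X | y = x ∨ c2Adj y x}

namespace DJC

lemma ne_iff (p q : ℤ × ℤ) : p ≠ q ↔ (p.1 ≠ q.1 ∨ p.2 ≠ q.2) := by
  constructor
  · intro h; by_contra hc; push_neg at hc
    exact h (Prod.ext_iff.mpr ⟨hc.1, hc.2⟩)
  · intro h hc; subst hc; simp at h

lemma c2_iff (p q : ℤ × ℤ) : c2Adj p q ↔
    ((p.1 ≠ q.1 ∨ p.2 ≠ q.2) ∧ |p.1 - q.1| ≤ 1 ∧ |p.2 - q.2| ≤ 1) := by
  rw [c2Adj, ne_iff]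

lemma c2_symm {p q : ℤ × ℤ} (h : c2Adj p q) : c2Adj q p := by
  rw [c2_iff] at *; rcases h with ⟨h1, h2, h3⟩
  rcases abs_le.mp h2; rcases abs_le.mp h3
  refine ⟨by omega, abs_le.mpr ⟨by omega, by omega⟩, abs_le.mpr ⟨by omega, by omega⟩⟩

lemma c1_symm {p q : ℤ × ℤ} (h : c1Adj p q) : c1Adj q p := by
  unfold c1Adj at *
  rcases abs_cases (p.1 - q.1) with ⟨h1,h2⟩|⟨h1,h2⟩ <;>
  rcases abs_cases (p.2 - q.2) with ⟨h3,h4⟩|⟨h3,h4⟩ <;>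
  rcases abs_cases (q.1 - p.1) with ⟨h5,h6⟩|⟨h5,h6⟩ <;>
  rcases abs_cases (q.2 - p.2) with ⟨h7,h8⟩|⟨h7,h8⟩ <;> omega

lemma reach_symm {W x y} (h : Reach c1Adj W x y) : Reach c1Adj W y x := by
  unfold Reach at *
  induction h with
  | refl => exact .refl
  | tail h1 h2 ih =>
      exact (Relation.ReflTransGen.single ⟨h2.2.1, h2.1, c1_symm h2.2.2⟩).trans ih

lemma reach_trans {W} {x y z : ℤ×ℤ} (h : Reach c1Adj W x y) (h' : Reach c1Adj W y z) :
    Reach c1Adj W x z := Relation.ReflTransGen.trans h h'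

lemma reach_single {W} {x y : ℤ×ℤ} (hx : x ∈ W) (hy : y ∈ W) (h : c1Adj x y) :
    Reach c1Adj W x y := Relation.ReflTransGen.single ⟨hx, hy, h⟩

lemma reach_mem {W} {x y : ℤ×ℤ} (h : Reach c1Adj W x y) (hx : x ∈ W) : y ∈ W := by
  induction h with
  | refl => exact hx
  | tail h1 h2 ih => exact h2.2.1

/-- the 8 ring directions, in CCW order -/
def dirs : List (ℤ × ℤ) := [(1,0),(1,1),(0,1),(-1,1),(-1,0),(-1,-1),(0,-1),(1,-1)]

def rg (θ : ℤ) : ℤ × ℤ := dirs.getD (θ.emod 8).toNat (1,0)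

def ang (d : ℤ × ℤ) : ℤ :=
  if d = (1,0) then 0 else if d = (1,1) then 1 else if d = (0,1) then 2
  else if d = (-1,1) then 3 else if d = (-1,0) then 4 else if d = (-1,-1) then 5
  else if d = (0,-1) then 6 else 7

def dlt (d : ℤ × ℤ) : ℤ := if d.1 = 0 ∨ d.2 = 0 then 2 else 1

lemma rg_congr {a b : ℤ} (h : a % 8 = b % 8) : rg a = rg b := by
  show dirs.getD (a % 8).toNat (1,0) = dirs.getD (b % 8).toNat (1,0)
  rw [h]

lemma rg_cases (θ : ℤ) :
    (θ % 8 = 0 ∧ rg θ = (1,0)) ∨ (θ % 8 = 1 ∧ rg θ = (1,1)) ∨ (θ % 8 = 2 ∧ rg θ = (0,1)) ∨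
    (θ % 8 = 3 ∧ rg θ = (-1,1)) ∨ (θ % 8 = 4 ∧ rg θ = (-1,0)) ∨ (θ % 8 = 5 ∧ rg θ = (-1,-1)) ∨
    (θ % 8 = 6 ∧ rg θ = (0,-1)) ∨ (θ % 8 = 7 ∧ rg θ = (1,-1)) := by
  have h : θ % 8 = 0 ∨ θ % 8 = 1 ∨ θ % 8 = 2 ∨ θ % 8 = 3 ∨ θ % 8 = 4 ∨ θ % 8 = 5 ∨
      θ % 8 = 6 ∨ θ % 8 = 7 := by omega
  unfold rg
  rcases h with h|h|h|h|h|h|h|h <;> rw [show θ.emod 8 = θ % 8 from rfl, h] <;> simp [dirs]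

lemma rg_mem (θ : ℤ) : rg θ ∈ dirs := by
  rcases rg_cases θ with ⟨_,h⟩|⟨_,h⟩|⟨_,h⟩|⟨_,h⟩|⟨_,h⟩|⟨_,h⟩|⟨_,h⟩|⟨_,h⟩ <;> rw [h] <;> decide

lemma ang_rg (θ : ℤ) : ang (rg θ) = θ % 8 := by
  rcases rg_cases θ with ⟨h,h2⟩|⟨h,h2⟩|⟨h,h2⟩|⟨h,h2⟩|⟨h,h2⟩|⟨h,h2⟩|⟨h,h2⟩|⟨h,h2⟩ <;>
    rw [h2, h] <;> decide

lemma rg_inj {a b : ℤ} (h : rg a = rg b) : a % 8 = b % 8 := by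
  have := ang_rg a; have := ang_rg b; rw [h] at *; omega

lemma rg_of_ang : ∀ d ∈ dirs, rg (ang d) = d := by decide

lemma ang_bounds : ∀ d ∈ dirs, 0 ≤ ang d ∧ ang d < 8 := by decide

lemma dirs_bounds : ∀ d ∈ dirs, d ≠ 0 ∧ |d.1| ≤ 1 ∧ |d.2| ≤ 1 := by decide

lemma rg_step (θ : ℤ) : |(rg θ).1 - (rg (θ-1)).1| + |(rg θ).2 - (rg (θ-1)).2| = 1 := by
  rcases rg_cases θ with ⟨h,h2⟩|⟨h,h2⟩|⟨h,h2⟩|⟨h,h2⟩|⟨h,h2⟩|⟨h,h2⟩|⟨h,h2⟩|⟨h,h2⟩ <;>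
  rcases rg_cases (θ-1) with ⟨g,g2⟩|⟨g,g2⟩|⟨g,g2⟩|⟨g,g2⟩|⟨g,g2⟩|⟨g,g2⟩|⟨g,g2⟩|⟨g,g2⟩ <;>
    first
    | omega
    | (rw [h2, g2]; decide)

end DJC

section
variable {m : ℕ}

lemma zmod_ne (hm : 4 ≤ m) (a : ℕ) (h1 : 0 < a) (h2 : a < m) : (a : ZMod m) ≠ 0 := by
  intro h
  have h3 := ZMod.val_cast_of_lt (n := m) h2
  haveI : NeZero m := ⟨by omega⟩
  rw [h, ZMod.val_zero] at h3
  omega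

lemma zmod1 (hm : 4 ≤ m) : (1 : ZMod m) ≠ 0 := by
  have := zmod_ne hm 1 (by norm_num) (by omega); simpa using this
lemma zmod2 (hm : 4 ≤ m) : (2 : ZMod m) ≠ 0 := by
  have := zmod_ne hm 2 (by norm_num) (by omega); simpa using this
lemma zmod3 (hm : 4 ≤ m) : (3 : ZMod m) ≠ 0 := by
  have := zmod_ne hm 3 (by norm_num) (by omega); simpa using this
end


namespace DJC

structure SC (m : ℕ) where
  s : ZMod m → ℤ × ℤ
  hm : 4 ≤ m
  hinj : Function.Injective s
  hedge : ∀ i, c2Adj (s i) (s (i + 1))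
  hclosed : ∀ i j, c2Adj (s i) (s j) → j = i + 1 ∨ j = i - 1

def SC.rev {m : ℕ} (C : SC m) : SC m where
  s := fun i => C.s (-i)
  hm := C.hm
  hinj := fun a b h => by have := C.hinj h; simpa using this
  hedge := fun i => by
    have := C.hedge (-i-1)
    have e : -i-1+1 = -i := by ring
    rw [e] at this
    have e2 : -(i+1) = -i-1 := by ring
    show c2Adj (C.s (-i)) (C.s (-(i+1)))
    rw [e2]
    exact c2_symm this
  hclosed := fun i j h => by
    rcases C.hclosed (-i) (-j) h with h1|h1
    · right; linear_combination -h1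
    · left; linear_combination -h1

lemma rev_s {m : ℕ} (C : SC m) (i : ZMod m) : C.rev.s i = C.s (-i) := rfl

lemma rev_range {m : ℕ} (C : SC m) : Set.range C.rev.s = Set.range C.s := by
  ext x; constructor <;> rintro ⟨i, rfl⟩
  · exact ⟨-i, rfl⟩
  · exact ⟨-i, by rw [rev_s, neg_neg]⟩

section Curve
variable {m : ℕ} (C : SC m)
include C

lemma zm1 : (1 : ZMod m) ≠ 0 := zmod1 C.hm
lemma zm2 : (2 : ZMod m) ≠ 0 := zmod2 C.hm
lemma zm3 : (3 : ZMod m) ≠ 0 := zmod3 C.hm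

/-- any common c₂-neighbor of two consecutive curve points is off the curve -/
lemma common_free (j : ZMod m) (x : ℤ × ℤ)
    (hA : c2Adj x (C.s j)) (hB : c2Adj x (C.s (j+1))) : x ∉ Set.range C.s := by
  rintro ⟨i, rfl⟩
  have h1 := C.hclosed i j hA
  have h2 := C.hclosed i (j+1) hB
  rcases h1 with h1|h1 <;> rcases h2 with h2|h2
  · exact zm1 C (by linear_combination h2 - h1)
  · exact zm3 C (by linear_combination h2 - h1)
  · exact zm1 C (by linear_combination h1 - h2)
  · exact zm1 C (by linear_combination h2 - h1)

/-- a curve point c₂-adjacent to s j is one of its curve neighbours -/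
lemma adj_mem (j : ZMod m) (x : ℤ × ℤ) (hx : x ∈ Set.range C.s)
    (h : c2Adj x (C.s j)) : x = C.s (j-1) ∨ x = C.s (j+1) := by
  obtain ⟨i, rfl⟩ := hx
  rcases C.hclosed i j h with h1|h1
  · left; rw [h1]; congr 1; ring
  · right; rw [h1]; congr 1; ring

omit C in
lemma c2_offset_mem {p q : ℤ × ℤ} (h : c2Adj p q) : p - q ∈ dirs := by
  obtain ⟨hne, h1, h2⟩ := (c2_iff p q).mp h
  have a1 := abs_le.mp h1
  have a2 := abs_le.mp h2
  simp only [dirs, List.mem_cons, List.not_mem_nil, or_false, Prod.ext_iff,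
    Prod.fst_sub, Prod.snd_sub]
  omega

omit C in
lemma add_off_ne {v : ℤ × ℤ} {o : ℤ × ℤ} (ho : o ≠ 0) : v + o ≠ v := by
  intro h; exact ho (by simpa using h)

omit C in
lemma c2_add_off (v : ℤ × ℤ) (o : ℤ × ℤ) (ho : o ∈ dirs) : c2Adj (v + o) v := by
  obtain ⟨h0, h1, h2⟩ := dirs_bounds o ho
  refine ⟨add_off_ne h0, ?_, ?_⟩ <;> simp [Prod.fst_add, Prod.snd_add] <;> assumption

lemma ring_free (k : ZMod m) (o : ℤ × ℤ) (ho : o ∈ dirs)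
    (h1 : C.s k + o ≠ C.s (k-1)) (h2 : C.s k + o ≠ C.s (k+1)) :
    C.s k + o ∉ Set.range C.s := by
  intro hx
  rcases adj_mem C k _ hx (c2_add_off (C.s k) o ho) with h|h
  · exact h1 h
  · exact h2 h

omit C in
lemma c1_off {v o o' : ℤ × ℤ} (h : |o.1 - o'.1| + |o.2 - o'.2| = 1) :
    c1Adj (v + o) (v + o') := by
  unfold c1Adj
  simp only [Prod.fst_add, Prod.snd_add]
  convert h using 2 <;> ring

lemma walkCW (k : ZMod m) (θ : ℤ) (n : ℕ)
    (hfree : ∀ t : ℕ, t ≤ n → C.s k + rg (θ - t) ≠ C.s (k-1) ∧ C.s k + rg (θ - t) ≠ C.s (k+1)) :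
    Reach c1Adj (Set.range C.s)ᶜ (C.s k + rg θ) (C.s k + rg (θ - n)) := by
  induction n with
  | zero =>
    norm_num
    exact Relation.ReflTransGen.refl
  | succ n ih =>
    have e : θ - ((n+1 : ℕ) : ℤ) = (θ - n) - 1 := by push_cast; ring
    rw [e]
    refine reach_trans (ih (fun t ht => hfree t (by omega))) ?_
    have h1 := hfree n (by omega)
    have h2 := hfree (n+1) le_rfl
    rw [e] at h2
    exact reach_single (ring_free C k _ (rg_mem _) h1.1 h1.2)
      (ring_free C k _ (rg_mem _) h2.1 h2.2)
      (c1_off (rg_step (θ - n)))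

end Curve
end DJC


namespace DJC

lemma dlt_bounds : ∀ d ∈ dirs, 1 ≤ dlt d ∧ dlt d ≤ 2 := by decide

lemma TB : ∀ e ∈ dirs, ∀ d ∈ dirs, (2 ≤ |d.1 - e.1| ∨ 2 ≤ |d.2 - e.2|) →
    dlt e + dlt d ≤ (ang e - ang d) % 8 := by decide

lemma EDEC : ∀ d ∈ dirs,
    ((rg (ang d + dlt d)) ≠ 0 ∧ |(rg (ang d + dlt d)).1| ≤ 1 ∧ |(rg (ang d + dlt d)).2| ≤ 1) ∧
    ((rg (ang d + dlt d)) ≠ d ∧ |(rg (ang d + dlt d)).1 - d.1| ≤ 1 ∧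
      |(rg (ang d + dlt d)).2 - d.2| ≤ 1) ∧
    ((d + rg (ang (-d) - dlt (-d))) ≠ 0 ∧ |(d + rg (ang (-d) - dlt (-d))).1| ≤ 1 ∧
      |(d + rg (ang (-d) - dlt (-d))).2| ≤ 1) ∧
    ((d + rg (ang (-d) - dlt (-d))) ≠ d ∧ |(d + rg (ang (-d) - dlt (-d))).1 - d.1| ≤ 1 ∧
      |(d + rg (ang (-d) - dlt (-d))).2 - d.2| ≤ 1) ∧
    ((rg (ang d + dlt d)) = (d + rg (ang (-d) - dlt (-d))) ∨
      |(rg (ang d + dlt d)).1 - (d + rg (ang (-d) - dlt (-d))).1| +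
      |(rg (ang d + dlt d)).2 - (d + rg (ang (-d) - dlt (-d))).2| = 1) := by decide

section Curve2
variable {m : ℕ} (C : SC m)

/-- the left point of edge k, at its tail -/
def Lpt (k : ZMod m) : ℤ × ℤ :=
  C.s k + rg (ang (C.s (k+1) - C.s k) + dlt (C.s (k+1) - C.s k))

omit C in
lemma c2_off2 (v : ℤ × ℤ) {o w : ℤ × ℤ} (hne : o ≠ w) (h1 : |o.1 - w.1| ≤ 1)
    (h2 : |o.2 - w.2| ≤ 1) : c2Adj (v + o) (v + w) := by
  refine ⟨fun h => hne (by simpa using h), ?_, ?_⟩ <;>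
    simp only [Prod.fst_add, Prod.snd_add] <;>
    [ (convert h1 using 2; ring) ; (convert h2 using 2; ring) ]

include C

lemma edge_reach (k : ZMod m) :
    Reach c1Adj (Set.range C.s)ᶜ (Lpt C k)
      (C.s (k+1) + rg (ang (C.s k - C.s (k+1)) - dlt (C.s k - C.s (k+1)))) := by
  set d := C.s (k+1) - C.s k with hd
  have hs1 : C.s (k+1) = C.s k + d := by rw [hd]; ring
  have hmd : C.s k - C.s (k+1) = -d := by rw [hd]; ring
  have hdm : d ∈ dirs := c2_offset_mem (c2_symm (C.hedge k))
  obtain ⟨hp1, hp2, hq1, hq2, hpq⟩ := EDEC d hdm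
  set p := rg (ang d + dlt d) with hp
  set q := d + rg (ang (-d) - dlt (-d)) with hq
  have hx : C.s k + p ∉ Set.range C.s := by
    refine common_free C k _ (c2_add_off _ _ ?_) ?_
    · rcases rg_cases (ang d + dlt d) with ⟨_,h⟩|⟨_,h⟩|⟨_,h⟩|⟨_,h⟩|⟨_,h⟩|⟨_,h⟩|⟨_,h⟩|⟨_,h⟩ <;>
        rw [← hp] at h <;> rw [h] <;> decide
    · rw [hs1]; exact c2_off2 _ hp2.1 hp2.2.1 hp2.2.2
  have hy : C.s k + q ∉ Set.range C.s := by
    refine common_free C k _ ?_ ?_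
    · have := c2_off2 (C.s k) (w := 0) hq1.1 (by simpa using hq1.2.1) (by simpa using hq1.2.2)
      simpa using this
    · rw [hs1]; exact c2_off2 _ hq2.1 hq2.2.1 hq2.2.2
  have hgoal : C.s (k+1) + rg (ang (C.s k - C.s (k+1)) - dlt (C.s k - C.s (k+1)))
      = C.s k + q := by rw [hmd, hs1, hq]; ring
  rw [hgoal]
  show Reach c1Adj (Set.range C.s)ᶜ (C.s k + p) (C.s k + q)
  rcases hpq with h|h
  · rw [h]; exact Relation.ReflTransGen.refl
  · exact reach_single hx hy (c1_off h)

lemma turn_reach (k : ZMod m) :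
    Reach c1Adj (Set.range C.s)ᶜ
      (C.s (k+1) + rg (ang (C.s k - C.s (k+1)) - dlt (C.s k - C.s (k+1))))
      (Lpt C (k+1)) := by
  set e := C.s k - C.s (k+1) with he'
  set d' := C.s (k+2) - C.s (k+1) with hd'
  have hsk : C.s k = C.s (k+1) + e := by rw [he']; ring
  have hsk2 : C.s (k+2) = C.s (k+1) + d' := by rw [hd']; ring
  have he : e ∈ dirs := c2_offset_mem (C.hedge k)
  have hd : d' ∈ dirs := by
    have : (k+1)+1 = k+2 := by ring
    have h2 := C.hedge (k+1)
    rw [this] at h2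
    exact c2_offset_mem (c2_symm h2)
  have hne : C.s k ≠ C.s (k+2) := by
    intro h
    have := C.hinj h
    exact zm2 C (by linear_combination -this)
  have hnadj : ¬ c2Adj (C.s k) (C.s (k+2)) := by
    intro h
    rcases C.hclosed k (k+2) h with h1|h1
    · exact zm1 C (by linear_combination h1)
    · exact zm3 C (by linear_combination h1)
  have hcon : 2 ≤ |d'.1 - e.1| ∨ 2 ≤ |d'.2 - e.2| := by
    by_contra hc
    push_neg at hc
    apply hnadj
    have e1 : (C.s k).1 - (C.s (k+2)).1 = e.1 - d'.1 := by
      rw [he', hd']; simp [Prod.fst_sub]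
    have e2 : (C.s k).2 - (C.s (k+2)).2 = e.2 - d'.2 := by
      rw [he', hd']; simp [Prod.snd_sub]
    have a1 := abs_sub_comm d'.1 e.1
    have a2 := abs_sub_comm d'.2 e.2
    refine ⟨hne, ?_, ?_⟩
    · rw [e1]; linarith [hc.1]
    · rw [e2]; linarith [hc.2]
  have hTB := TB e he d' hd hcon
  set γ := (ang e - ang d') % 8 with hγ
  have hγ8 : γ < 8 := by omega
  have hde := dlt_bounds e he
  have hdd := dlt_bounds d' hd
  have hae := ang_bounds e he
  have had := ang_bounds d' hd
  have hn0 : (0:ℤ) ≤ γ - dlt e - dlt d' := by omega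
  set n : ℕ := (γ - dlt e - dlt d').toNat with hn
  have hnn : (n : ℤ) = γ - dlt e - dlt d' := Int.toNat_of_nonneg hn0
  have hfree : ∀ t : ℕ, t ≤ n →
      C.s (k+1) + rg (ang e - dlt e - t) ≠ C.s ((k+1)-1) ∧
      C.s (k+1) + rg (ang e - dlt e - t) ≠ C.s ((k+1)+1) := by
    intro t ht
    have htz : (t:ℤ) ≤ γ - dlt e - dlt d' := by omega
    have ht0 : (0:ℤ) ≤ t := by positivity
    constructor
    · intro h
      rw [show (k+1)-1 = k by ring, hsk] at h
      have hr : rg (ang e - dlt e - t) = rg (ang e) := by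
        rw [rg_of_ang e he]; exact add_left_cancel h
      have := rg_inj hr
      omega
    · intro h
      rw [show (k+1)+1 = k+2 by ring, hsk2] at h
      have hr : rg (ang e - dlt e - t) = rg (ang d') := by
        rw [rg_of_ang d' hd]; exact add_left_cancel h
      have := rg_inj hr
      omega
  have hw := walkCW C (k+1) (ang e - dlt e) n hfree
  have hend : rg (ang e - dlt e - n) = rg (ang d' + dlt d') := by
    apply rg_congr
    omega
  rw [hend] at hw
  have hL : Lpt C (k+1) = C.s (k+1) + rg (ang d' + dlt d') := by
    rw [Lpt, show (k+1)+1 = k+2 by ring, ← hd']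
  rw [hL]
  exact hw

lemma chain_step (k : ZMod m) :
    Reach c1Adj (Set.range C.s)ᶜ (Lpt C k) (Lpt C (k+1)) :=
  reach_trans (edge_reach C k) (turn_reach C k)

lemma chain_n (n : ℕ) (k : ZMod m) :
    Reach c1Adj (Set.range C.s)ᶜ (Lpt C k) (Lpt C (k + n)) := by
  induction n with
  | zero => simp only [Nat.cast_zero, add_zero]; exact Relation.ReflTransGen.refl
  | succ n ih =>
    have e : k + ((n+1 : ℕ) : ZMod m) = (k + n) + 1 := by push_cast; ring
    rw [e]
    exact reach_trans ih (chain_step C (k + n))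

lemma chain (i j : ZMod m) :
    Reach c1Adj (Set.range C.s)ᶜ (Lpt C i) (Lpt C j) := by
  haveI : NeZero m := ⟨by have := C.hm; omega⟩
  have h := chain_n C ((j - i).val) i
  rw [ZMod.natCast_rightInverse (j - i)] at h
  rw [show i + (j - i) = j by ring] at h
  exact h

end Curve2
end DJC


namespace DJC
section Curve3
variable {m : ℕ} (C : SC m)
include C

lemma arcToL (k : ZMod m) (o : ℤ × ℤ) (ho : o ∈ dirs)
    (hfree : C.s k + o ∉ Set.range C.s)
    (hside : (ang o - ang (C.s (k+1) - C.s k)) % 8 < (ang o - ang (C.s (k-1) - C.s k)) % 8) :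
    Reach c1Adj (Set.range C.s)ᶜ (C.s k + o) (Lpt C k) := by
  set eo := C.s (k-1) - C.s k with heo
  set d' := C.s (k+1) - C.s k with hd'
  have hsk1 : C.s (k-1) = C.s k + eo := by rw [heo]; ring
  have hsk2 : C.s (k+1) = C.s k + d' := by rw [hd']; ring
  have he : eo ∈ dirs := by
    have h2 := C.hedge (k-1)
    rw [show (k-1)+1 = k by ring] at h2
    exact c2_offset_mem h2
  have hd : d' ∈ dirs := c2_offset_mem (c2_symm (C.hedge k))
  have hne : C.s (k+1) ≠ C.s (k-1) := by
    intro h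
    have := C.hinj h
    exact zm2 C (by linear_combination this)
  have hnadj : ¬ c2Adj (C.s (k+1)) (C.s (k-1)) := by
    intro h
    rcases C.hclosed (k+1) (k-1) h with h1|h1
    · exact zm3 C (by linear_combination -h1)
    · exact zm1 C (by linear_combination -h1)
  have hcon : 2 ≤ |d'.1 - eo.1| ∨ 2 ≤ |d'.2 - eo.2| := by
    by_contra hc
    push_neg at hc
    apply hnadj
    have e1 : (C.s (k+1)).1 - (C.s (k-1)).1 = d'.1 - eo.1 := by
      rw [heo, hd']; simp [Prod.fst_sub]
    have e2 : (C.s (k+1)).2 - (C.s (k-1)).2 = d'.2 - eo.2 := by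
      rw [heo, hd']; simp [Prod.snd_sub]
    refine ⟨hne, ?_, ?_⟩
    · rw [e1]; linarith [hc.1, abs_nonneg (d'.1 - eo.1)]
    · rw [e2]; linarith [hc.2, abs_nonneg (d'.2 - eo.2)]
  have hTB := TB eo he d' hd hcon
  set α := ang eo with hα
  set β := ang d' with hβ
  set ψ := ang o with hψ
  have hro : rg ψ = o := rg_of_ang o ho
  have hre : rg α = eo := rg_of_ang eo he
  have hrd : rg β = d' := rg_of_ang d' hd
  have hone : o ≠ eo := by
    intro h
    apply hfree
    rw [h, ← hsk1]
    exact ⟨k-1, rfl⟩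
  have hond : o ≠ d' := by
    intro h
    apply hfree
    rw [h, ← hsk2]
    exact ⟨k+1, rfl⟩
  have hψα : ψ ≠ α := fun h => hone (by rw [← hro, h, hre])
  have hψβ : ψ ≠ β := fun h => hond (by rw [← hro, h, hrd])
  have hαβ : α ≠ β := by
    intro h
    have : eo = d' := by rw [← hre, h, hrd]
    apply hne
    rw [hsk1, hsk2, this]
  have hae := ang_bounds eo he
  have had := ang_bounds d' hd
  have hao := ang_bounds o ho
  have hde := dlt_bounds eo he
  have hdd := dlt_bounds d' hd
  have hLpt : Lpt C k = C.s k + rg (β + dlt d') := by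
    rw [Lpt, ← hd', ← hβ]
  by_cases hw : dlt d' ≤ (ψ - β) % 8
  · -- normal CW walk
    have hn0 : (0:ℤ) ≤ (ψ - β) % 8 - dlt d' := by omega
    set n : ℕ := ((ψ - β) % 8 - dlt d').toNat with hn
    have hnn : (n:ℤ) = (ψ - β) % 8 - dlt d' := Int.toNat_of_nonneg hn0
    have hfree' : ∀ t : ℕ, t ≤ n →
        C.s k + rg (ψ - t) ≠ C.s (k-1) ∧ C.s k + rg (ψ - t) ≠ C.s (k+1) := by
      intro t ht
      have htz : (t:ℤ) ≤ (ψ - β) % 8 - dlt d' := by omega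
      have ht0 : (0:ℤ) ≤ t := by positivity
      constructor
      · intro h
        rw [hsk1] at h
        have hr : rg (ψ - t) = rg α := by rw [hre]; exact add_left_cancel h
        have := rg_inj hr
        omega
      · intro h
        rw [hsk2] at h
        have hr : rg (ψ - t) = rg β := by rw [hrd]; exact add_left_cancel h
        have := rg_inj hr
        omega
    have hw0 : (ψ : ℤ) - 0 = ψ := by ring
    have hwalk := walkCW C k ψ n hfree'
    have hend : rg (ψ - n) = rg (β + dlt d') := by
      apply rg_congr
      omega
    rw [hend] at hwalk
    rw [hLpt]
    rw [show C.s k + rg ψ = C.s k + o by rw [hro]] at hwalk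
    exact hwalk
  · -- special single CCW step
    push_neg at hw
    have hw1 : (ψ - β) % 8 = 1 ∧ dlt d' = 2 := by
      constructor <;> omega
    have hstart : o = rg (β + 1) := by
      rw [← hro]
      apply rg_congr
      omega
    have hendfree : C.s k + rg (β + 2) ∉ Set.range C.s := by
      apply ring_free C k _ (rg_mem _)
      · rw [hsk1]
        intro h
        have hr : rg (β + 2) = rg α := by rw [hre]; exact add_left_cancel h
        have := rg_inj hr
        omega
      · rw [hsk2]
        intro h
        have hr : rg (β + 2) = rg β := by rw [hrd]; exact add_left_cancel h
        have := rg_inj hr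
        omega
    have hstep : c1Adj (C.s k + o) (C.s k + rg (β + 2)) := by
      apply c1_symm
      apply c1_off
      rw [hstart, show β + 1 = (β + 2) - 1 by ring]
      exact rg_step (β + 2)
    rw [hLpt, hw1.2]
    exact reach_single hfree hendfree hstep

lemma vertex_arc (k : ZMod m) (o : ℤ × ℤ) (ho : o ∈ dirs)
    (hfree : C.s k + o ∉ Set.range C.s) :
    Reach c1Adj (Set.range C.s)ᶜ (C.s k + o) (Lpt C 0) ∨
    Reach c1Adj (Set.range C.s)ᶜ (C.s k + o) (Lpt C.rev 0) := by
  have hne : C.s (k+1) ≠ C.s (k-1) := by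
    intro h
    have := C.hinj h
    exact zm2 C (by linear_combination this)
  have he : C.s (k-1) - C.s k ∈ dirs := by
    have h2 := C.hedge (k-1)
    rw [show (k-1)+1 = k by ring] at h2
    exact c2_offset_mem h2
  have hd : C.s (k+1) - C.s k ∈ dirs := c2_offset_mem (c2_symm (C.hedge k))
  have hαβ : ang (C.s (k+1) - C.s k) ≠ ang (C.s (k-1) - C.s k) := by
    intro h
    apply hne
    have : C.s (k+1) - C.s k = C.s (k-1) - C.s k := by
      rw [← rg_of_ang _ hd, h, rg_of_ang _ he]
    have h2 := congrArg (· + C.s k) this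
    simpa using h2
  have hae := ang_bounds _ he
  have had := ang_bounds _ hd
  have hao := ang_bounds o ho
  by_cases hside : (ang o - ang (C.s (k+1) - C.s k)) % 8 < (ang o - ang (C.s (k-1) - C.s k)) % 8
  · left
    exact reach_trans (arcToL C k o ho hfree hside) (chain C k 0)
  · right
    push_neg at hside
    have hlt : (ang o - ang (C.s (k-1) - C.s k)) % 8 < (ang o - ang (C.s (k+1) - C.s k)) % 8 := by
      rcases lt_or_eq_of_le hside with h|h
      · exact h
      · exfalso; omega
    have hkk : C.rev.s (-k) = C.s k := by rw [rev_s, neg_neg]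
    have hk1 : C.rev.s (-k+1) = C.s (k-1) := by
      rw [rev_s, show -(-k+1) = k-1 by ring]
    have hk2 : C.rev.s (-k-1) = C.s (k+1) := by
      rw [rev_s, show -(-k-1) = k+1 by ring]
    have hfree' : C.rev.s (-k) + o ∉ Set.range C.rev.s := by
      rw [hkk, rev_range]
      exact hfree
    have hside' : (ang o - ang (C.rev.s (-k+1) - C.rev.s (-k))) % 8 <
        (ang o - ang (C.rev.s (-k-1) - C.rev.s (-k))) % 8 := by
      rw [hkk, hk1, hk2]
      exact hlt
    have h := arcToL C.rev (-k) o ho hfree' (by rw [show (-k:ZMod m)+1 = -k+1 from rfl, show (-k:ZMod m)-1 = -k-1 from rfl]; exact hside')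
    have h2 := reach_trans h (chain C.rev (-k) 0)
    rw [rev_range, hkk] at h2
    exact h2

end Curve3
end DJC


namespace DJC

lemma add_self_zmod2 (a b : ZMod 2) (h : a + b = 0) : a = b := by revert h; revert a b; decide

lemma ind_helper {A B Cc D : Prop} [Decidable A] [Decidable B] [Decidable Cc] [Decidable D]
    (h : Xor' A B ↔ Xor' Cc D) :
    ((if A then (1:ZMod 2) else 0) + (if B then 1 else 0)) =
      ((if Cc then 1 else 0) + (if D then 1 else 0)) := by
  split_ifs <;> simp_all [Xor'] <;> decide

lemma ind_helper2 {A Cc D : Prop} [Decidable A] [Decidable Cc] [Decidable D]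
    (h : A ↔ Xor' Cc D) :
    (if A then (1:ZMod 2) else 0) = ((if Cc then 1 else 0) + (if D then 1 else 0)) := by
  split_ifs <;> simp_all [Xor'] <;> decide

section Parity
variable {m : ℕ} [NeZero m] (C : SC m)

def Cross (p : ℤ × ℤ) (i : ZMod m) : Prop :=
  (((C.s i).2 = p.2 ∧ (C.s (i+1)).2 = p.2 + 1) ∨ ((C.s i).2 = p.2 + 1 ∧ (C.s (i+1)).2 = p.2)) ∧
    2 * p.1 + 1 ≤ (C.s i).1 + (C.s (i+1)).1

instance (p : ℤ × ℤ) (i : ZMod m) : Decidable (Cross C p i) := by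
  unfold Cross; infer_instance

def Pa (p : ℤ × ℤ) : ZMod 2 := ∑ i : ZMod m, if Cross C p i then 1 else 0

lemma sum_shift (f : ZMod m → ZMod 2) : ∑ i : ZMod m, f (i+1) = ∑ i : ZMod m, f i :=
  Fintype.sum_equiv (Equiv.addRight (1 : ZMod m)) _ _ (fun _ => rfl)

lemma edge_bounds (i : ZMod m) :
    -1 ≤ (C.s i).1 - (C.s (i+1)).1 ∧ (C.s i).1 - (C.s (i+1)).1 ≤ 1 ∧
    -1 ≤ (C.s i).2 - (C.s (i+1)).2 ∧ (C.s i).2 - (C.s (i+1)).2 ≤ 1 := by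
  obtain ⟨_, h1, h2⟩ := C.hedge i
  have := abs_le.mp h1
  have := abs_le.mp h2
  exact ⟨by omega, by omega, by omega, by omega⟩

lemma ne_comp {x y : ℤ × ℤ} (h : x ≠ y) : x.1 ≠ y.1 ∨ x.2 ≠ y.2 := (ne_iff x y).mp h

lemma P_horiz (p q : ℤ × ℤ) (hq1 : q.1 = p.1 + 1) (hq2 : q.2 = p.2)
    (hp : p ∉ Set.range C.s) (hq : q ∉ Set.range C.s) : Pa C p = Pa C q := by
  unfold Pa
  apply Finset.sum_congr rfl
  intro i _
  have hb := edge_bounds C i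
  have h1 := ne_comp (x := C.s i) (y := p) (fun h => hp ⟨i, h⟩)
  have h2 := ne_comp (x := C.s (i+1)) (y := p) (fun h => hp ⟨i+1, h⟩)
  have h3 := ne_comp (x := C.s i) (y := q) (fun h => hq ⟨i, h⟩)
  have h4 := ne_comp (x := C.s (i+1)) (y := q) (fun h => hq ⟨i+1, h⟩)
  have : Cross C p i ↔ Cross C q i := by
    unfold Cross
    omega
  simp only [this]

lemma P_vert (p q : ℤ × ℤ) (hq1 : q.1 = p.1) (hq2 : q.2 = p.2 + 1)
    (hq : q ∉ Set.range C.s) : Pa C p = Pa C q := by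
  apply add_self_zmod2
  have key : ∀ i : ZMod m,
      ((if Cross C p i then (1:ZMod 2) else 0) + (if Cross C q i then 1 else 0)) =
      ((if ((C.s i).2 = p.2 + 1 ∧ p.1 + 1 ≤ (C.s i).1) then (1:ZMod 2) else 0) +
       (if ((C.s (i+1)).2 = p.2 + 1 ∧ p.1 + 1 ≤ (C.s (i+1)).1) then (1:ZMod 2) else 0)) := by
    intro i
    apply ind_helper
    have hb := edge_bounds C i
    have h3 := ne_comp (x := C.s i) (y := q) (fun h => hq ⟨i, h⟩)
    have h4 := ne_comp (x := C.s (i+1)) (y := q) (fun h => hq ⟨i+1, h⟩)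
    unfold Cross
    unfold Xor'
    unfold Xor
    omega
  unfold Pa
  rw [← Finset.sum_add_distrib]
  rw [Finset.sum_congr rfl (fun i _ => key i)]
  rw [Finset.sum_add_distrib]
  rw [sum_shift (fun i => if ((C.s i).2 = p.2 + 1 ∧ p.1 + 1 ≤ (C.s i).1) then (1:ZMod 2) else 0)]
  rw [← two_mul]
  rw [show (2 : ZMod 2) = 0 by decide, zero_mul]

lemma P_step {p q : ℤ × ℤ} (hp : p ∉ Set.range C.s) (hq : q ∉ Set.range C.s)
    (h : c1Adj p q) : Pa C p = Pa C q := by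
  unfold c1Adj at h
  have h1 := abs_cases (p.1 - q.1)
  have h2 := abs_cases (p.2 - q.2)
  have hc : (q.1 = p.1 + 1 ∧ q.2 = p.2) ∨ (p.1 = q.1 + 1 ∧ p.2 = q.2) ∨
      (q.1 = p.1 ∧ q.2 = p.2 + 1) ∨ (p.1 = q.1 ∧ p.2 = q.2 + 1) := by omega
  rcases hc with ⟨ha, hb⟩|⟨ha, hb⟩|⟨ha, hb⟩|⟨ha, hb⟩
  · exact P_horiz C p q ha hb hp hq
  · exact (P_horiz C q p ha hb hq hp).symm
  · exact P_vert C p q ha hb hq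
  · exact (P_vert C q p ha hb hp).symm

lemma P_reach {p q : ℤ × ℤ} (h : Reach c1Adj (Set.range C.s)ᶜ p q) : Pa C p = Pa C q := by
  induction h with
  | refl => rfl
  | tail h1 h2 ih => exact ih.trans (P_step C h2.1 h2.2.1 h2.2.2)

lemma P_noCross {p : ℤ × ℤ} (h : ∀ i, ¬ Cross C p i) : Pa C p = 0 := by
  unfold Pa
  exact Finset.sum_eq_zero (fun i _ => if_neg (h i))

lemma P_right {p : ℤ × ℤ} (h : ∀ i, (C.s i).1 ≤ p.1) : Pa C p = 0 := by
  apply P_noCross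
  intro i hi
  have := h i
  have := h (i+1)
  obtain ⟨_, h2⟩ := hi
  omega

lemma P_high {p : ℤ × ℤ} (h : ∀ i, (C.s i).2 ≤ p.2) : Pa C p = 0 := by
  apply P_noCross
  intro i hi
  have := h i
  have := h (i+1)
  obtain ⟨h1, _⟩ := hi
  omega

lemma P_lowY {p : ℤ × ℤ} (h : ∀ i, p.2 + 1 ≤ (C.s i).2) : Pa C p = 0 := by
  apply P_noCross
  intro i hi
  have := h i
  have := h (i+1)
  obtain ⟨h1, _⟩ := hi
  omega

lemma P_left {p : ℤ × ℤ} (h : ∀ i, p.1 + 1 ≤ (C.s i).1) : Pa C p = 0 := by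
  have key : ∀ i : ZMod m,
      (if Cross C p i then (1:ZMod 2) else 0) =
      ((if ((C.s i).2 ≥ p.2 + 1) then (1:ZMod 2) else 0) +
       (if ((C.s (i+1)).2 ≥ p.2 + 1) then (1:ZMod 2) else 0)) := by
    intro i
    apply ind_helper2
    have hb := edge_bounds C i
    have := h i
    have := h (i+1)
    unfold Cross
    unfold Xor'
    unfold Xor
    omega
  unfold Pa
  rw [Finset.sum_congr rfl (fun i _ => key i)]
  rw [Finset.sum_add_distrib]
  rw [sum_shift (fun i => if ((C.s i).2 ≥ p.2 + 1) then (1:ZMod 2) else 0)]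
  rw [← two_mul]
  rw [show (2 : ZMod 2) = 0 by decide, zero_mul]

end Parity
end DJC


namespace DJC
section Curve4
variable {m : ℕ} (C : SC m)
include C

lemma walk_gen (p : ℤ × ℤ) (v : ℤ × ℤ) (hv : |v.1| + |v.2| = 1) (n : ℕ)
    (hfree : ∀ t : ℕ, t ≤ n → ((p.1 + t * v.1, p.2 + t * v.2) : ℤ × ℤ) ∉ Set.range C.s) :
    Reach c1Adj (Set.range C.s)ᶜ p (p.1 + n * v.1, p.2 + n * v.2) := by
  induction n with
  | zero =>
    have h0 : Reach c1Adj (Set.range C.s)ᶜ p p := Relation.ReflTransGen.refl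
    simpa using h0
  | succ n ih =>
    refine reach_trans (ih (fun t ht => hfree t (by omega))) ?_
    refine reach_single (hfree n (by omega)) (hfree (n+1) le_rfl) ?_
    show |(p.1 + (n:ℤ) * v.1) - (p.1 + ((n+1:ℕ):ℤ) * v.1)| +
      |(p.2 + (n:ℤ) * v.2) - (p.2 + ((n+1:ℕ):ℤ) * v.2)| = 1
    push_cast
    have e1 : (p.1 + (n:ℤ) * v.1) - (p.1 + ((n:ℤ)+1) * v.1) = -v.1 := by ring
    have e2 : (p.2 + (n:ℤ) * v.2) - (p.2 + ((n:ℤ)+1) * v.2) = -v.2 := by ring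
    rw [e1, e2, abs_neg, abs_neg]
    exact hv

lemma cov_top (khat : ZMod m) (htop : ∀ i, (C.s i).2 ≤ (C.s khat).2)
    (q : ℤ × ℤ) (hq : (C.s khat).2 + 1 ≤ q.2) :
    Reach c1Adj (Set.range C.s)ᶜ q (Lpt C 0) ∨
    Reach c1Adj (Set.range C.s)ᶜ q (Lpt C.rev 0) := by
  set xh := (C.s khat).1 with hxh
  set yh := (C.s khat).2 with hyh
  have hfree_high : ∀ r : ℤ × ℤ, yh + 1 ≤ r.2 → r ∉ Set.range C.s := by
    rintro r hr ⟨j, hj⟩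
    have := htop j
    rw [hj] at this
    omega
  have hw1 := walk_gen C q ((0 : ℤ), (-1 : ℤ)) (by decide) ((q.2 - (yh+1)).toNat)
    (fun t ht => hfree_high _ (by show yh + 1 ≤ q.2 + (t:ℤ) * (-1); omega))
  have he1 : ((q.1 + ((q.2 - (yh+1)).toNat : ℤ) * (0:ℤ), q.2 + ((q.2 - (yh+1)).toNat : ℤ) * (-1:ℤ)) : ℤ × ℤ)
      = (q.1, yh + 1) := by
    simp only [Prod.mk.injEq]
    constructor <;> omega
  rw [he1] at hw1
  -- horizontal walk to (xh, yh+1)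
  have hw2 : Reach c1Adj (Set.range C.s)ᶜ ((q.1, yh + 1) : ℤ × ℤ) ((xh, yh + 1) : ℤ × ℤ) := by
    rcases le_total q.1 xh with hle|hle
    · have hw := walk_gen C ((q.1, yh+1) : ℤ × ℤ) ((1 : ℤ), (0 : ℤ)) (by decide) ((xh - q.1).toNat)
        (fun t ht => hfree_high _ (by show yh + 1 ≤ yh + 1 + (t:ℤ) * 0; omega))
      have he : ((q.1 + ((xh - q.1).toNat : ℤ) * (1:ℤ), (yh+1) + ((xh - q.1).toNat : ℤ) * (0:ℤ)) : ℤ × ℤ)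
          = (xh, yh + 1) := by
        simp only [Prod.mk.injEq]
        constructor <;> omega
      rw [he] at hw
      exact hw
    · have hw := walk_gen C ((q.1, yh+1) : ℤ × ℤ) ((-1 : ℤ), (0 : ℤ)) (by decide) ((q.1 - xh).toNat)
        (fun t ht => hfree_high _ (by show yh + 1 ≤ yh + 1 + (t:ℤ) * 0; omega))
      have he : ((q.1 + ((q.1 - xh).toNat : ℤ) * (-1:ℤ), (yh+1) + ((q.1 - xh).toNat : ℤ) * (0:ℤ)) : ℤ × ℤ)
          = (xh, yh + 1) := by
        simp only [Prod.mk.injEq]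
        constructor <;> omega
      rw [he] at hw
      exact hw
  have hpt : C.s khat + ((0:ℤ),(1:ℤ)) = ((xh, yh + 1) : ℤ × ℤ) := by
    simp only [Prod.ext_iff, Prod.fst_add, Prod.snd_add]
    constructor <;> simp [hxh, hyh]
  have hva := vertex_arc C khat ((0:ℤ),(1:ℤ)) (by decide)
    (by rw [hpt]; exact hfree_high _ (by simp))
  rw [hpt] at hva
  rcases hva with h|h
  · exact Or.inl (reach_trans (reach_trans hw1 hw2) h)
  · exact Or.inr (reach_trans (reach_trans hw1 hw2) h)

lemma coverage (khat : ZMod m) (htop : ∀ i, (C.s i).2 ≤ (C.s khat).2)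
    (q : ℤ × ℤ) (hq : q ∉ Set.range C.s) :
    Reach c1Adj (Set.range C.s)ᶜ q (Lpt C 0) ∨
    Reach c1Adj (Set.range C.s)ᶜ q (Lpt C.rev 0) := by
  set yh := (C.s khat).2 with hyh
  have haux : ∀ (n : ℕ) (r : ℤ × ℤ), r ∉ Set.range C.s → yh + 1 - r.2 ≤ n →
      Reach c1Adj (Set.range C.s)ᶜ r (Lpt C 0) ∨
      Reach c1Adj (Set.range C.s)ᶜ r (Lpt C.rev 0) := by
    intro n
    induction n with
    | zero =>
      intro r hr hn
      exact cov_top C khat htop r (by omega)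
    | succ n ih =>
      intro r hr hn
      by_cases htall : yh + 1 ≤ r.2
      · exact cov_top C khat htop r htall
      · set r2 : ℤ × ℤ := (r.1, r.2 + 1) with hr2
        by_cases hmem : r2 ∈ Set.range C.s
        · obtain ⟨j, hj⟩ := hmem
          have hpt : C.s j + ((0:ℤ),(-1:ℤ)) = r := by
            rw [hj, hr2]
            simp only [Prod.ext_iff, Prod.fst_add, Prod.snd_add]
            constructor <;> simp
          have hva := vertex_arc C j ((0:ℤ),(-1:ℤ)) (by decide) (by rw [hpt]; exact hr)
          rw [hpt] at hva
          exact hva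
        · have hstep : Reach c1Adj (Set.range C.s)ᶜ r r2 := by
            refine reach_single hr hmem ?_
            show |r.1 - r2.1| + |r.2 - r2.2| = 1
            rw [hr2]
            simp only []
            have : r.2 - (r.2 + 1) = -1 := by ring
            norm_num
          rcases ih r2 hmem (by rw [hr2]; simp only []; omega) with h|h
          · exact Or.inl (reach_trans hstep h)
          · exact Or.inr (reach_trans hstep h)
  exact haux (yh + 1 - q.2).toNat q hq (by omega)

end Curve4
end DJC


namespace DJC

lemma abs_ge2 {x : ℤ} (h : 2 ≤ |x|) : 2 ≤ x ∨ x ≤ -2 := by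
  rcases abs_cases x with ⟨e,_⟩|⟨e,_⟩ <;> omega

lemma abs_lt2 {x : ℤ} (h : |x| < 2) : |x| ≤ 1 := by
  rcases abs_cases x with ⟨e,_⟩|⟨e,_⟩ <;> omega

section Main
variable {m : ℕ} [NeZero m] (C : SC m)
include C

lemma P_one (khat i0 : ZMod m)
    (htop : ∀ i, (C.s i).2 ≤ (C.s khat).2)
    (htopx : ∀ i, (C.s i).2 = (C.s khat).2 → (C.s i).1 ≤ (C.s khat).1)
    (hi0 : (C.s i0 = C.s khat ∧ (C.s (i0+1)).1 = (C.s khat).1 + 1 ∧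
              (C.s (i0+1)).2 = (C.s khat).2 - 1) ∨
           (C.s (i0+1) = C.s khat ∧ (C.s i0).1 = (C.s khat).1 + 1 ∧
              (C.s i0).2 = (C.s khat).2 - 1)) :
    Pa C ((C.s khat).1, (C.s khat).2 - 1) = 1 := by
  set p0 : ℤ × ℤ := ((C.s khat).1, (C.s khat).2 - 1) with hp0def
  have hp01 : p0.1 = (C.s khat).1 := rfl
  have hp02 : p0.2 = (C.s khat).2 - 1 := rfl
  have hCrossIff : ∀ i, Cross C p0 i ↔ i = i0 := by
    intro i
    constructor
    · intro hi
      obtain ⟨hrow, hsum⟩ := hi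
      have hb := edge_bounds C i
      rcases hrow with ⟨h1, h2⟩ | ⟨h1, h2⟩
      · -- bottom at i, top at i+1
        have e2 : (C.s (i+1)).2 = (C.s khat).2 := by omega
        have hx := htopx (i+1) e2
        have hco : (C.s (i+1)).1 = (C.s khat).1 ∧ (C.s i).1 = (C.s khat).1 + 1 := by omega
        have hEqa : C.s (i+1) = C.s khat := Prod.ext_iff.mpr ⟨hco.1, e2⟩
        have hia : i + 1 = khat := C.hinj hEqa
        rcases hi0 with ⟨g1, g2, g3⟩ | ⟨g1, g2, g3⟩
        · -- i0 = khat; contradiction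
          exfalso
          have hi0k : i0 = khat := C.hinj g1
          have hEqc : C.s i = C.s (i0+1) := Prod.ext_iff.mpr ⟨by omega, by omega⟩
          have := C.hinj hEqc
          -- i = i0 + 1 = khat + 1 and i + 1 = khat : 2 = 0
          exact zm2 C (by linear_combination hia - this - hi0k)
        · have hi0k : i0 + 1 = khat := C.hinj g1
          -- i = i0
          linear_combination hia - hi0k
      · -- top at i, bottom at i+1
        have e2 : (C.s i).2 = (C.s khat).2 := by omega
        have hx := htopx i e2
        have hco : (C.s i).1 = (C.s khat).1 ∧ (C.s (i+1)).1 = (C.s khat).1 + 1 := by omega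
        have hEqa : C.s i = C.s khat := Prod.ext_iff.mpr ⟨hco.1, e2⟩
        have hia : i = khat := C.hinj hEqa
        rcases hi0 with ⟨g1, g2, g3⟩ | ⟨g1, g2, g3⟩
        · have hi0k : i0 = khat := C.hinj g1
          linear_combination hia - hi0k
        · exfalso
          have hi0k : i0 + 1 = khat := C.hinj g1
          have hEqc : C.s (i+1) = C.s i0 := Prod.ext_iff.mpr ⟨by omega, by omega⟩
          have := C.hinj hEqc
          exact zm2 C (by linear_combination this + hi0k - hia)
    · intro hi
      subst hi
      rcases hi0 with ⟨g1, g2, g3⟩ | ⟨g1, g2, g3⟩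
      · have e1 : (C.s i).1 = (C.s khat).1 := by rw [g1]
        have e2 : (C.s i).2 = (C.s khat).2 := by rw [g1]
        exact ⟨Or.inr ⟨by omega, by omega⟩, by omega⟩
      · have e1 : (C.s (i+1)).1 = (C.s khat).1 := by rw [g1]
        have e2 : (C.s (i+1)).2 = (C.s khat).2 := by rw [g1]
        exact ⟨Or.inl ⟨by omega, by omega⟩, by omega⟩
  unfold Pa
  have hrw : ∀ i : ZMod m, (if Cross C p0 i then (1:ZMod 2) else 0) =
      (if i = i0 then 1 else 0) := by
    intro i
    by_cases h : Cross C p0 i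
    · rw [if_pos h, if_pos ((hCrossIff i).mp h)]
    · rw [if_neg h, if_neg (fun e => h ((hCrossIff i).mpr e))]
  rw [Finset.sum_congr rfl (fun i _ => hrw i)]
  rw [Finset.sum_ite_eq' Finset.univ i0 (fun _ => (1:ZMod 2))]
  simp

theorem main :
    ∃ A B : Set (ℤ × ℤ),
      A ∪ B = (Set.range C.s)ᶜ ∧ Disjoint A B ∧ A.Nonempty ∧ B.Nonempty ∧
      (∀ a ∈ A, ∀ a' ∈ A, Reach c1Adj (Set.range C.s)ᶜ a a') ∧
      (∀ b ∈ B, ∀ b' ∈ B, Reach c1Adj (Set.range C.s)ᶜ b b') ∧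
      (∀ a ∈ A, ∀ b ∈ B, ¬ Reach c1Adj (Set.range C.s)ᶜ a b) ∧
      A.Finite ∧ B.Infinite := by
  obtain ⟨khat, -, hkmax⟩ := Finset.exists_max_image Finset.univ
    (fun i => toLex ((C.s i).2, (C.s i).1)) ⟨0, Finset.mem_univ 0⟩
  have htop : ∀ i, (C.s i).2 ≤ (C.s khat).2 := by
    intro i
    have := hkmax i (Finset.mem_univ i)
    rw [Prod.Lex.le_iff] at this
    rcases this with h|h
    · exact le_of_lt h
    · exact le_of_eq h.1
  have htopx : ∀ i, (C.s i).2 = (C.s khat).2 → (C.s i).1 ≤ (C.s khat).1 := by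
    intro i hi
    have := hkmax i (Finset.mem_univ i)
    rw [Prod.Lex.le_iff] at this
    rcases this with h|h
    · simp only [ofLex_toLex] at h; omega
    · exact h.2
  have hadj1 : c2Adj (C.s (khat-1)) (C.s khat) := by
    have := C.hedge (khat-1)
    rwa [show khat-1+1 = khat by ring] at this
  have hadj2 : c2Adj (C.s (khat+1)) (C.s khat) := c2_symm (C.hedge khat)
  have hne12 : C.s (khat-1) ≠ C.s (khat+1) := by
    intro h
    have := C.hinj h
    exact zm2 C (by linear_combination -this)
  have hnadj12 : ¬ c2Adj (C.s (khat-1)) (C.s (khat+1)) := by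
    intro h
    rcases C.hclosed (khat-1) (khat+1) h with h1|h1
    · exact zm1 C (by linear_combination h1)
    · exact zm3 C (by linear_combination h1)
  have hcand : ∀ j : ZMod m, c2Adj (C.s j) (C.s khat) →
      ((C.s j).1 = (C.s khat).1 - 1 ∧ (C.s j).2 = (C.s khat).2) ∨
      ((C.s j).1 = (C.s khat).1 - 1 ∧ (C.s j).2 = (C.s khat).2 - 1) ∨
      ((C.s j).1 = (C.s khat).1 ∧ (C.s j).2 = (C.s khat).2 - 1) ∨
      ((C.s j).1 = (C.s khat).1 + 1 ∧ (C.s j).2 = (C.s khat).2 - 1) := by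
    intro j hj
    obtain ⟨hne, hb1, hb2⟩ := hj
    have a1 := abs_le.mp hb1
    have a2 := abs_le.mp hb2
    have h3 := ne_comp hne
    have h4 := htop j
    by_cases h5 : (C.s j).2 = (C.s khat).2
    · have := htopx j h5
      omega
    · omega
  have hc1 := hcand (khat-1) hadj1
  have hc2 := hcand (khat+1) hadj2
  have hsep12 : (2 ≤ (C.s (khat-1)).1 - (C.s (khat+1)).1 ∨
      (C.s (khat-1)).1 - (C.s (khat+1)).1 ≤ -2) ∨
      (2 ≤ (C.s (khat-1)).2 - (C.s (khat+1)).2 ∨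
      (C.s (khat-1)).2 - (C.s (khat+1)).2 ≤ -2) := by
    by_contra h
    push_neg at h
    apply hnadj12
    exact ⟨hne12, abs_le.mpr ⟨by omega, by omega⟩, abs_le.mpr ⟨by omega, by omega⟩⟩
  have hkeyc : ((C.s (khat+1)).1 = (C.s khat).1 + 1 ∧ (C.s (khat+1)).2 = (C.s khat).2 - 1) ∨
      ((C.s (khat-1)).1 = (C.s khat).1 + 1 ∧ (C.s (khat-1)).2 = (C.s khat).2 - 1) := by
    omega
  have hp0c : ¬((C.s (khat+1)).1 = (C.s khat).1 ∧ (C.s (khat+1)).2 = (C.s khat).2 - 1) ∧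
      ¬((C.s (khat-1)).1 = (C.s khat).1 ∧ (C.s (khat-1)).2 = (C.s khat).2 - 1) := by
    omega
  set p0 : ℤ × ℤ := ((C.s khat).1, (C.s khat).2 - 1) with hp0def
  have hp01 : p0.1 = (C.s khat).1 := rfl
  have hp02 : p0.2 = (C.s khat).2 - 1 := rfl
  have hp0free : p0 ∉ Set.range C.s := by
    rintro ⟨j, hj⟩
    have hadj : c2Adj (C.s j) (C.s khat) := by
      rw [hj]
      refine ⟨?_, ?_, ?_⟩
      · intro h
        have := (Prod.ext_iff.mp h).2
        rw [hp02] at this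
        omega
      · rw [hp01]
        simp
      · rw [hp02]
        norm_num
    rcases adj_mem C khat (C.s j) ⟨j, rfl⟩ hadj with h|h
    · rw [h] at hj
      exact hp0c.2 ⟨(Prod.ext_iff.mp hj).1, (Prod.ext_iff.mp hj).2⟩
    · rw [h] at hj
      exact hp0c.1 ⟨(Prod.ext_iff.mp hj).1, (Prod.ext_iff.mp hj).2⟩
  have hP1 : Pa C p0 = 1 := by
    rcases hkeyc with hcc | hcc
    · exact P_one C khat khat htop htopx (Or.inl ⟨rfl, hcc.1, hcc.2⟩)
    · refine P_one C khat (khat-1) htop htopx (Or.inr ⟨?_, hcc.1, hcc.2⟩)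
      rw [show khat-1+1 = khat by ring]
  set wpt : ℤ × ℤ := ((C.s khat).1, (C.s khat).2 + 1) with hwdef
  have hwfree : wpt ∉ Set.range C.s := by
    rintro ⟨j, hj⟩
    have h1 := htop j
    have h2 := (Prod.ext_iff.mp hj).2
    have : wpt.2 = (C.s khat).2 + 1 := rfl
    omega
  have hPhighw : ∀ x : ℤ × ℤ, (C.s khat).2 + 1 ≤ x.2 → Pa C x = 0 := by
    intro x hx
    apply P_high
    intro i
    have := htop i
    omega
  set A : Set (ℤ × ℤ) := {x | Reach c1Adj (Set.range C.s)ᶜ p0 x} with hA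
  set B : Set (ℤ × ℤ) := (Set.range C.s)ᶜ \ A with hB
  have hp0A : p0 ∈ A := Relation.ReflTransGen.refl
  have hAsub : A ⊆ (Set.range C.s)ᶜ := fun x hx => reach_mem hx hp0free
  have hPA : ∀ x ∈ A, Pa C x = 1 := by
    intro x hx
    have := P_reach C (hx : Reach c1Adj (Set.range C.s)ᶜ p0 x)
    rw [← this, hP1]
  have hwB : wpt ∈ B := by
    refine ⟨hwfree, fun hw => ?_⟩
    have h1 := hPA wpt hw
    have h2 := hPhighw wpt (by rw [hwdef])
    rw [h1] at h2
    exact absurd h2 (by decide)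
  have hcov := coverage C khat htop
  have hconnAA : ∀ a ∈ A, ∀ a' ∈ A, Reach c1Adj (Set.range C.s)ᶜ a a' :=
    fun a ha a' ha' => reach_trans (reach_symm ha) ha'
  have hsepAB : ∀ a ∈ A, ∀ b ∈ B, ¬ Reach c1Adj (Set.range C.s)ᶜ a b :=
    fun a ha b hb hr => hb.2 (reach_trans ha hr)
  -- finiteness of A
  obtain ⟨jxmax, -, hjxmax⟩ := Finset.exists_max_image Finset.univ
    (fun i => (C.s i).1) ⟨0, Finset.mem_univ 0⟩
  obtain ⟨jxmin, -, hjxmin⟩ := Finset.exists_min_image Finset.univ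
    (fun i => (C.s i).1) ⟨0, Finset.mem_univ 0⟩
  obtain ⟨jymin, -, hjymin⟩ := Finset.exists_min_image Finset.univ
    (fun i => (C.s i).2) ⟨0, Finset.mem_univ 0⟩
  have hAfin : A.Finite := by
    apply Set.Finite.subset (Set.finite_Icc
      (((C.s jxmin).1 - 1, (C.s jymin).2 - 1) : ℤ × ℤ)
      (((C.s jxmax).1, (C.s khat).2) : ℤ × ℤ))
    intro x hx
    have h1 := hPA x hx
    have hne0 : Pa C x ≠ 0 := by rw [h1]; decide
    rw [Set.mem_Icc]
    have b1 : x.1 ≤ (C.s jxmax).1 := by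
      by_contra hcon
      push_neg at hcon
      exact hne0 (P_right C (fun i => by have := hjxmax i (Finset.mem_univ i); omega))
    have b2 : (C.s jxmin).1 - 1 ≤ x.1 := by
      by_contra hcon
      push_neg at hcon
      exact hne0 (P_left C (fun i => by have := hjxmin i (Finset.mem_univ i); omega))
    have b3 : (C.s jymin).2 - 1 ≤ x.2 := by
      by_contra hcon
      push_neg at hcon
      exact hne0 (P_lowY C (fun i => by have := hjymin i (Finset.mem_univ i); omega))
    have b4 : x.2 ≤ (C.s khat).2 := by
      by_contra hcon
      push_neg at hcon
      exact hne0 (P_high C (fun i => by have := htop i; omega))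
    exact ⟨⟨b2, b3⟩, ⟨b1, b4⟩⟩
  have hBinf : B.Infinite := by
    refine Set.infinite_of_injective_forall_mem
      (f := fun t : ℤ => ((t, (C.s khat).2 + 1) : ℤ × ℤ))
      (fun a b h => (Prod.ext_iff.mp h).1) ?_
    intro t
    have hfree : ((t, (C.s khat).2 + 1) : ℤ × ℤ) ∉ Set.range C.s := by
      rintro ⟨j, hj⟩
      have := htop j
      have h2 := (Prod.ext_iff.mp hj).2
      omega
    refine ⟨hfree, fun hmem => ?_⟩
    have h1 := hPA _ hmem
    have h2 := hPhighw ((t, (C.s khat).2 + 1) : ℤ × ℤ) (by norm_num)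
    rw [h1] at h2
    exact absurd h2 (by decide)
  have hunion : A ∪ B = (Set.range C.s)ᶜ := Set.union_diff_cancel hAsub
  have hdisj : Disjoint A B := Set.disjoint_sdiff_right
  rcases hcov p0 hp0free with hPL | hPL
  · have hBR : ∀ b ∈ B, Reach c1Adj (Set.range C.s)ᶜ b (Lpt C.rev 0) := by
      intro b hb
      rcases hcov b hb.1 with h|h
      · exact absurd (reach_trans hPL (reach_symm h)) hb.2
      · exact h
    exact ⟨A, B, hunion, hdisj, ⟨p0, hp0A⟩, ⟨wpt, hwB⟩, hconnAA,
      fun b hb b' hb' => reach_trans (hBR b hb) (reach_symm (hBR b' hb')),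
      hsepAB, hAfin, hBinf⟩
  · have hBR : ∀ b ∈ B, Reach c1Adj (Set.range C.s)ᶜ b (Lpt C 0) := by
      intro b hb
      rcases hcov b hb.1 with h|h
      · exact h
      · exact absurd (reach_trans hPL (reach_symm h)) hb.2
    exact ⟨A, B, hunion, hdisj, ⟨p0, hp0A⟩, ⟨wpt, hwB⟩, hconnAA,
      fun b hb b' hb' => reach_trans (hBR b hb) (reach_symm (hBR b' hb')),
      hsepAB, hAfin, hBinf⟩

end Main
end DJC


/-- Jordan Curve Theorem for digital topology: the complement of a c₂-simple closed
curve of at least 4 points has exactly two c₁-components, one finite and one infinite. -/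
theorem digital_jordan_curve (S : Set (ℤ × ℤ)) (hS : SCC S) :
    ∃ A B : Set (ℤ × ℤ),
      A ∪ B = Sᶜ ∧ Disjoint A B ∧ A.Nonempty ∧ B.Nonempty ∧
      (∀ a ∈ A, ∀ a' ∈ A, Reach c1Adj Sᶜ a a') ∧
      (∀ b ∈ B, ∀ b' ∈ B, Reach c1Adj Sᶜ b b') ∧
      (∀ a ∈ A, ∀ b ∈ B, ¬ Reach c1Adj Sᶜ a b) ∧
      A.Finite ∧ B.Infinite := by
  obtain ⟨m, hm, s, hinj, hrange, hedge, hclosed⟩ := hS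
  haveI : NeZero m := ⟨by omega⟩
  have hr : Set.range (DJC.SC.mk s hm hinj hedge hclosed).s = S := hrange
  have h := DJC.main (DJC.SC.mk s hm hinj hedge hclosed)
  rw [hr] at h
  exact h
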